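/- Let s : 𝕋 → ℝ be continuous with 0 < inf s ≤ sup s < ∞, and let g ∈ H². Then the equation T(s)[h] = g has a unique solution h ∈ H². -/

import Mathlib

open MeasureTheory Complex

/-- The `n`-th Fourier coefficient of a real symbol `s`:
`t_n = ∫_{-π}^{π} s(u) e^{-inu} du/(2π)`. -/
noncomputable def fCoeffR (s : ℝ → ℝ) (n : ℤ) : ℂ :=
  (2 * Real.pi : ℂ)⁻¹ * ∫ u in (-Real.pi)..Real.pi, (s u : ℂ) * Complex.exp (-I * n * u)

lemma fCoeffR_const (m : ℝ) (n : ℤ) :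
    fCoeffR (fun _ => m) n = if n = 0 then (m : ℂ) else 0 := by
  unfold fCoeffR
  rcases eq_or_ne n 0 with rfl | hn
  · simp only [Int.cast_zero, mul_zero, zero_mul, Complex.exp_zero, mul_one, if_pos rfl]
    rw [intervalIntegral.integral_const]
    have : ((Real.pi : ℂ) - (-Real.pi : ℝ)) = 2 * Real.pi := by push_cast; ring
    rw [sub_neg_eq_add]
    have h2 : (2 * Real.pi : ℂ) ≠ 0 := by
      simp [Real.pi_ne_zero, Complex.ofReal_ne_zero]
    field_simp
    simp only [↓reduceIte, Complex.real_smul]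
    push_cast
    ring
  · rw [if_neg hn]
    have hc : (-I * n : ℂ) ≠ 0 := by
      simp [Complex.I_ne_zero, Int.cast_injective.ne_iff, hn]
    have : ∀ u : ℝ, ((m : ℝ) : ℂ) * Complex.exp (-I * n * u) = (m : ℂ) * Complex.exp ((-I * n) * u) := by
      intro u; ring_nf
    rw [intervalIntegral.integral_const_mul]
    have hi : (∫ u in (-Real.pi)..Real.pi, Complex.exp ((-I * n) * u)) = 0 := by
      rw [integral_exp_mul_complex hc]
      have e1 : Complex.exp (-I * n * Real.pi) = (-1 : ℂ) ^ n := by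
        have : (-I * n * Real.pi : ℂ) = n * (-(Real.pi * I)) := by ring
        rw [this, Complex.exp_int_mul, ← Complex.exp_int_mul]
        have : ((n : ℂ) * -(Real.pi * I)) = (-n : ℤ) * (Real.pi * I) := by push_cast; ring
        rw [this, Complex.exp_int_mul, Complex.exp_pi_mul_I, zpow_neg, ← inv_zpow, inv_neg, inv_one]
      have e2 : Complex.exp (-I * n * (-Real.pi : ℝ)) = (-1 : ℂ) ^ n := by
        push_cast
        have : (-I * n * (-Real.pi) : ℂ) = n * (Real.pi * I) := by ring
        rw [this, Complex.exp_int_mul, Complex.exp_pi_mul_I]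
      rw [e1, e2, sub_self, zero_div]
    rw [hi, mul_zero, mul_zero]

lemma quad_form_eq (f : ℝ → ℝ) (hf : Continuous f) (F : Finset ℕ) (c : ℕ → ℂ) :
    ∑ j ∈ F, ∑ k ∈ F, (starRingEnd ℂ) (c j) * c k * fCoeffR f ((j:ℤ) - (k:ℤ))
      = (((2 * Real.pi)⁻¹ * ∫ u in (-Real.pi)..Real.pi,
          f u * Complex.normSq (∑ k ∈ F, c k * Complex.exp (I * k * u)) : ℝ) : ℂ) := by
  have key : ∀ u : ℝ, ((f u * Complex.normSq (∑ k ∈ F, c k * Complex.exp (I * k * u)) : ℝ) : ℂ)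
      = ∑ j ∈ F, ∑ k ∈ F, (starRingEnd ℂ) (c j) * c k *
          ((f u : ℂ) * Complex.exp (-I * (((j:ℤ) - (k:ℤ) : ℤ) : ℂ) * u)) := by
    intro u
    rw [Complex.ofReal_mul, Complex.normSq_eq_conj_mul_self, map_sum, Finset.sum_mul_sum,
      Finset.mul_sum]
    refine Finset.sum_congr rfl fun j hj => ?_
    rw [Finset.mul_sum]
    refine Finset.sum_congr rfl fun k hk => ?_
    simp only [map_mul, Complex.conj_I, Complex.conj_ofReal, Complex.conj_natCast,
      ← Complex.exp_conj]
    rw [show ((-I * (((j:ℤ) - (k:ℤ) : ℤ) : ℂ) * u) : ℂ) = (-I * j * u) + (I * k * u) by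
      push_cast; ring, Complex.exp_add]
    ring_nf
  have hint : ∀ j k : ℕ, IntervalIntegrable
      (fun u : ℝ => (starRingEnd ℂ) (c j) * c k *
        ((f u : ℂ) * Complex.exp (-I * (((j:ℤ) - (k:ℤ) : ℤ) : ℂ) * u)))
      volume (-Real.pi) Real.pi := by
    intro j k
    apply Continuous.intervalIntegrable
    fun_prop
  rw [Complex.ofReal_mul, ← intervalIntegral.integral_ofReal,
    intervalIntegral.integral_congr (fun u _ => key u),
    intervalIntegral.integral_finset_sum (fun j _ => by
      apply Continuous.intervalIntegrable; fun_prop)]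
  rw [Finset.mul_sum]
  refine Finset.sum_congr rfl fun j hj => ?_
  rw [intervalIntegral.integral_finset_sum (fun k _ => hint j k), Finset.mul_sum]
  refine Finset.sum_congr rfl fun k hk => ?_
  rw [intervalIntegral.integral_const_mul]
  unfold fCoeffR
  push_cast
  ring

/-- Let `s : 𝕋 → ℝ` be continuous with `0 < inf s ≤ sup s < ∞` and let `g ∈ H²`.
Then the Toeplitz equation `T(s)[h] = g` has a unique solution `h ∈ H²`.
The Hardy space is modeled as a Hilbert space with Hardy basis `e`, and `T(s)`
is the operator with matrix elements `⟨e j, T e k⟩ = t_{j-k}`. -/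
theorem toeplitz_equation_unique_solution
    (s : ℝ → ℝ) (hs : Continuous s) (hper : ∀ u, s (u + 2 * Real.pi) = s u)
    (m : ℝ) (hm : 0 < m) (hlb : ∀ u, m ≤ s u)
    (M : ℝ) (hub : ∀ u, s u ≤ M)
    (H2 : Type*) [NormedAddCommGroup H2] [InnerProductSpace ℂ H2] [CompleteSpace H2]
    (e : HilbertBasis ℕ ℂ H2)
    (T : H2 →L[ℂ] H2)
    (hT : ∀ j k : ℕ, (inner ℂ (e j) (T (e k)) : ℂ) = fCoeffR s ((j : ℤ) - (k : ℤ)))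
    (g : H2) :
    ∃! h : H2, T h = g := by
  classical
  -- Coercivity on finite linear combinations of basis vectors
  have hspan : ∀ h ∈ Submodule.span ℂ (Set.range (e : ℕ → H2)),
      m * ‖h‖ ^ 2 ≤ Complex.re (inner ℂ h (T h) : ℂ) := by
    intro h hh
    obtain ⟨c, rfl⟩ := (Finsupp.mem_span_range_iff_exists_finsupp).1 hh
    rw [Finsupp.sum]
    set F := c.support with hF
    -- expand the quadratic form
    have hTform : (inner ℂ (∑ j ∈ F, c j • (e j : H2)) (T (∑ k ∈ F, c k • (e k : H2))) : ℂ)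
        = ∑ j ∈ F, ∑ k ∈ F, (starRingEnd ℂ) (c j) * c k * fCoeffR s ((j:ℤ) - (k:ℤ)) := by
      rw [map_sum]
      rw [sum_inner]
      refine Finset.sum_congr rfl fun j hj => ?_
      rw [inner_sum]
      refine Finset.sum_congr rfl fun k hk => ?_
      rw [T.map_smul, inner_smul_left, inner_smul_right, hT j k]
      ring
    -- diagonal computation for the constant symbol m
    have diag : ∑ j ∈ F, ∑ k ∈ F, (starRingEnd ℂ) (c j) * c k * fCoeffR (fun _ => m) ((j:ℤ) - (k:ℤ))
        = ((m * ∑ j ∈ F, Complex.normSq (c j) : ℝ) : ℂ) := by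
      push_cast
      rw [Finset.mul_sum]
      refine Finset.sum_congr rfl fun j hj => ?_
      rw [Finset.sum_eq_single j]
      · rw [fCoeffR_const, sub_self, if_pos rfl, Complex.normSq_eq_conj_mul_self]; ring
      · intro k hk hkj
        have hne : ((j:ℤ) - (k:ℤ)) ≠ 0 := by
          rw [sub_ne_zero]
          exact fun hjk => hkj (by exact_mod_cast hjk.symm)
        rw [fCoeffR_const, if_neg hne, mul_zero]
      · intro hj'; exact absurd hj hj'
    -- norm of h via orthonormality
    have hnorm : ‖∑ j ∈ F, c j • (e j : H2)‖ ^ 2 = ∑ j ∈ F, Complex.normSq (c j) := by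
      have := e.orthonormal.inner_sum c c F
      have h2 : Complex.re (inner ℂ (∑ j ∈ F, c j • (e j : H2)) (∑ j ∈ F, c j • (e j : H2)) : ℂ)
          = ∑ j ∈ F, Complex.normSq (c j) := by
        rw [this, Complex.re_sum]
        refine Finset.sum_congr rfl fun j hj => ?_
        rw [← Complex.normSq_eq_conj_mul_self, Complex.ofReal_re]
      rw [← h2, inner_self_eq_norm_sq_to_K (𝕜 := ℂ)]
      simp [← Complex.ofReal_pow]
    -- the two integral identities
    have A := quad_form_eq s hs F c
    have B := quad_form_eq (fun _ => m) continuous_const F c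
    rw [diag] at B
    have hBr : m * ∑ j ∈ F, Complex.normSq (c j)
        = (2 * Real.pi)⁻¹ * ∫ u in (-Real.pi)..Real.pi,
            m * Complex.normSq (∑ k ∈ F, c k * Complex.exp (I * k * u)) := by
      exact_mod_cast B
    have hAr : Complex.re (∑ j ∈ F, ∑ k ∈ F,
          (starRingEnd ℂ) (c j) * c k * fCoeffR s ((j:ℤ) - (k:ℤ)))
        = (2 * Real.pi)⁻¹ * ∫ u in (-Real.pi)..Real.pi,
            s u * Complex.normSq (∑ k ∈ F, c k * Complex.exp (I * k * u)) := by
      rw [A, Complex.ofReal_re]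
    rw [hTform, hAr, hnorm, hBr]
    -- compare the two integrals
    have hle : (∫ u in (-Real.pi)..Real.pi,
          m * Complex.normSq (∑ k ∈ F, c k * Complex.exp (I * k * u)))
        ≤ ∫ u in (-Real.pi)..Real.pi,
          s u * Complex.normSq (∑ k ∈ F, c k * Complex.exp (I * k * u)) := by
      have hcont : Continuous fun u : ℝ =>
          Complex.normSq (∑ k ∈ F, c k * Complex.exp (I * k * u)) :=
        Complex.continuous_normSq.comp (by fun_prop)
      apply intervalIntegral.integral_mono_on (by linarith [Real.pi_pos])
      · exact (continuous_const.mul hcont).intervalIntegrable _ _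
      · exact (hs.mul hcont).intervalIntegrable _ _
      · intro u hu
        exact mul_le_mul_of_nonneg_right (hlb u) (Complex.normSq_nonneg _)
    have h2pi : (0:ℝ) ≤ (2 * Real.pi)⁻¹ := by positivity
    exact mul_le_mul_of_nonneg_left hle h2pi
  -- Coercivity everywhere, by density
  have key : ∀ h : H2, m * ‖h‖ ^ 2 ≤ Complex.re (inner ℂ h (T h) : ℂ) := by
    have hclosed : IsClosed {h : H2 | m * ‖h‖ ^ 2 ≤ Complex.re (inner ℂ h (T h) : ℂ)} := by
      apply isClosed_le
      · fun_prop
      · exact Complex.continuous_re.comp (Continuous.inner continuous_id T.continuous)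
    have hdense : Dense (Submodule.span ℂ (Set.range (e : ℕ → H2)) : Set H2) :=
      Submodule.dense_iff_topologicalClosure_eq_top.2 e.dense_span
    intro h
    have : (Set.univ : Set H2) ⊆ {h : H2 | m * ‖h‖ ^ 2 ≤ Complex.re (inner ℂ h (T h) : ℂ)} := by
      rw [← hdense.closure_eq]
      exact closure_minimal hspan hclosed
    exact this (Set.mem_univ h)
  -- lower bound on ‖T h‖
  have hbound : ∀ h : H2, m * ‖h‖ ≤ ‖T h‖ := by
    intro h
    rcases eq_or_ne h 0 with rfl | hne
    · simp
    · have h1 : m * ‖h‖ ^ 2 ≤ ‖h‖ * ‖T h‖ := by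
        calc m * ‖h‖ ^ 2 ≤ Complex.re (inner ℂ h (T h) : ℂ) := key h
          _ ≤ ‖(inner ℂ h (T h) : ℂ)‖ := Complex.re_le_norm _
          _ = ‖(inner ℂ h (T h) : ℂ)‖ := rfl
          _ ≤ ‖h‖ * ‖T h‖ := norm_inner_le_norm _ _
      have hpos : 0 < ‖h‖ := norm_pos_iff.2 hne
      nlinarith
  -- injectivity
  have hinj : Function.Injective T := by
    intro a b hab
    have := hbound (a - b)
    rw [map_sub, hab, sub_self, norm_zero] at this
    have : ‖a - b‖ ≤ 0 := by nlinarith [norm_nonneg (a - b)]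
    rw [← sub_eq_zero]
    exact norm_le_zero_iff.1 this
  -- surjectivity
  have hanti : AntilipschitzWith (⟨m, hm.le⟩ : NNReal)⁻¹ T := by
    apply T.antilipschitz_of_bound
    intro x
    show ‖x‖ ≤ m⁻¹ * ‖T x‖
    rw [← div_eq_inv_mul, le_div_iff₀ hm, mul_comm]
    exact hbound x
  have hrange_closed : IsClosed (Set.range T : Set H2) :=
    hanti.isClosed_range T.uniformContinuous
  have hrange_closed' : IsClosed ((LinearMap.range (T : H2 →ₗ[ℂ] H2) : Submodule ℂ H2) : Set H2) := by
    have hco : ((LinearMap.range (T : H2 →ₗ[ℂ] H2) : Submodule ℂ H2) : Set H2) = Set.range T := by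
      ext x
      simp only [SetLike.mem_coe, LinearMap.mem_range, Set.mem_range, ContinuousLinearMap.coe_coe]
    rw [hco]; exact hrange_closed
  haveI : CompleteSpace (LinearMap.range (T : H2 →ₗ[ℂ] H2) : Submodule ℂ H2) :=
    hrange_closed'.completeSpace_coe
  have horth : (LinearMap.range (T : H2 →ₗ[ℂ] H2) : Submodule ℂ H2)ᗮ = ⊥ := by
    rw [Submodule.eq_bot_iff]
    intro v hv
    have h0 : (inner ℂ (T v) v : ℂ) = 0 :=
      (Submodule.mem_orthogonal _ v).1 hv (T v) (LinearMap.mem_range_self _ v)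
    have h0' : (inner ℂ v (T v) : ℂ) = 0 := by
      rw [← inner_conj_symm, h0, map_zero]
    have hkv := key v
    rw [h0', Complex.zero_re] at hkv
    have hv0 : ‖v‖ = 0 := by
      by_contra hne
      have hpos : 0 < ‖v‖ := lt_of_le_of_ne (norm_nonneg v) (Ne.symm hne)
      nlinarith [mul_pos hm (mul_pos hpos hpos)]
    exact norm_eq_zero.1 hv0
  have htop : (LinearMap.range (T : H2 →ₗ[ℂ] H2) : Submodule ℂ H2) = ⊤ :=
    (Submodule.orthogonal_eq_bot_iff).1 horth
  obtain ⟨h, hh⟩ : ∃ h, T h = g := by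
    have : g ∈ (LinearMap.range (T : H2 →ₗ[ℂ] H2) : Submodule ℂ H2) := htop ▸ Submodule.mem_top
    exact this
  exact ⟨h, hh, fun y hy => hinj (hy.trans hh.symm)⟩
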